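/- If n ≡ 0 (mod 3) and n ≥ 6, then the partition of {1,...,n} into the sets B_a = {3a+1, 3a+2, 3a+3} for 0 ≤ a ≤ n/3 - 1 is a block system for the action of ⟨r_n, r_{n-3}, r_2⟩; in particular each of r_n, r_{n-3}, r_2 permutes the blocks, and ⟨r_n, r_{n-3}, r_2⟩ is a proper subgroup of Sym_n. -/

import Mathlib

/-- The prefix reversal `r i` on positions `1..n` (0-indexed as `Fin n`):
position `x+1 ↦ i+1-(x+1)` for `x+1 ≤ i`, i.e. `x ↦ i-1-x` for `x < i`, fixing the rest. -/
def pr (n i : ℕ) : Equiv.Perm (Fin n) :=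
  Function.Involutive.toPerm
    (fun x => if h : x.val < i ∧ i ≤ n then ⟨i - 1 - x.val, by omega⟩ else x)
    (by
      intro x
      apply Fin.ext
      dsimp only
      split_ifs with h1 h2 h3 <;> simp_all <;> omega)

lemma pr_apply (n i : ℕ) (x : Fin n) :
    pr n i x = if h : x.val < i ∧ i ≤ n then ⟨i - 1 - x.val, by omega⟩ else x := rfl

lemma inv_pres {n : ℕ} (h3 : n % 3 = 0) (g : Equiv.Perm (Fin n))
    (hg : ∀ x y : Fin n, x.val / 3 = y.val / 3 → (g x).val / 3 = (g y).val / 3) :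
    ∀ x y : Fin n, x.val / 3 = y.val / 3 → (g⁻¹ x).val / 3 = (g⁻¹ y).val / 3 := by
  intro x y hxy
  set a := g⁻¹ x with ha
  have hga : g a = x := g.apply_symm_apply x
  have hav : a.val < n := a.isLt
  set k := a.val / 3 with hk
  have hkn : 3 * k + 2 < n := by omega
  set u0 : Fin n := ⟨3*k, by omega⟩ with hu0d
  set u1 : Fin n := ⟨3*k+1, by omega⟩ with hu1d
  set u2 : Fin n := ⟨3*k+2, by omega⟩ with hu2d
  have hu0 : (g u0).val / 3 = x.val / 3 := by
    rw [← hga]; exact hg u0 a (by simp only [hu0d, Fin.val_mk]; omega)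
  have hu1 : (g u1).val / 3 = x.val / 3 := by
    rw [← hga]; exact hg u1 a (by simp only [hu1d, Fin.val_mk]; omega)
  have hu2 : (g u2).val / 3 = x.val / 3 := by
    rw [← hga]; exact hg u2 a (by simp only [hu2d, Fin.val_mk]; omega)
  have h01 : (g u0).val ≠ (g u1).val := by
    intro h
    have : u0 = u1 := g.injective (Fin.ext h)
    simp [hu0d, hu1d, Fin.ext_iff] at this
  have h02 : (g u0).val ≠ (g u2).val := by
    intro h
    have : u0 = u2 := g.injective (Fin.ext h)
    simp [hu0d, hu2d, Fin.ext_iff] at this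
  have h12 : (g u1).val ≠ (g u2).val := by
    intro h
    have : u1 = u2 := g.injective (Fin.ext h)
    simp [hu1d, hu2d, Fin.ext_iff] at this
  have hy : y.val = (g u0).val ∨ y.val = (g u1).val ∨ y.val = (g u2).val := by
    omega
  rcases hy with h | h | h
  · have : g⁻¹ y = u0 := by rw [Fin.ext_iff.mpr h]; exact g.symm_apply_apply _
    rw [this]; simp only [hu0d, Fin.val_mk]; omega
  · have : g⁻¹ y = u1 := by rw [Fin.ext_iff.mpr h]; exact g.symm_apply_apply _
    rw [this]; simp only [hu1d, Fin.val_mk]; omega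
  · have : g⁻¹ y = u2 := by rw [Fin.ext_iff.mpr h]; exact g.symm_apply_apply _
    rw [this]; simp only [hu2d, Fin.val_mk]; omega

theorem stmt12 (n : ℕ) (hn : 6 ≤ n) (h3 : n % 3 = 0) :
    (∀ g ∈ ({pr n n, pr n (n - 3), pr n 2} : Set (Equiv.Perm (Fin n))),
      ∀ x y : Fin n, x.val / 3 = y.val / 3 → (g x).val / 3 = (g y).val / 3) ∧
    Subgroup.closure ({pr n n, pr n (n - 3), pr n 2} : Set (Equiv.Perm (Fin n))) ≠ ⊤ := by
  have key : ∀ g ∈ ({pr n n, pr n (n - 3), pr n 2} : Set (Equiv.Perm (Fin n))),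
      ∀ x y : Fin n, x.val / 3 = y.val / 3 → (g x).val / 3 = (g y).val / 3 := by
    intro g hg x y hxy
    simp only [Set.mem_insert_iff, Set.mem_singleton_iff] at hg
    rcases hg with rfl | rfl | rfl <;>
    · simp only [pr_apply]
      have hx := x.isLt
      have hy := y.isLt
      split_ifs <;> (try simp only [Fin.val_mk]) <;> omega
  refine ⟨key, ?_⟩
  intro htop
  have hall : ∀ g ∈ Subgroup.closure ({pr n n, pr n (n - 3), pr n 2} : Set (Equiv.Perm (Fin n))),
      ∀ x y : Fin n, x.val / 3 = y.val / 3 → (g x).val / 3 = (g y).val / 3 := by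
    intro g hg
    induction hg using Subgroup.closure_induction with
    | mem g hg => exact key g hg
    | one => intro x y h; simpa using h
    | mul g h _ _ hgp hhp =>
      intro x y hxy
      exact hgp _ _ (hhp x y hxy)
    | inv g _ hgp => exact inv_pres h3 g hgp
  have p0 : (0 : ℕ) < n := by omega
  have p1 : (1 : ℕ) < n := by omega
  have p3 : (3 : ℕ) < n := by omega
  set x0 : Fin n := ⟨0, p0⟩ with hx0
  set x1 : Fin n := ⟨1, p1⟩ with hx1
  set x3 : Fin n := ⟨3, p3⟩ with hx3
  set s : Equiv.Perm (Fin n) := Equiv.swap x0 x3 with hs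
  have hsmem : s ∈ Subgroup.closure ({pr n n, pr n (n - 3), pr n 2} : Set (Equiv.Perm (Fin n))) := by
    rw [htop]; trivial
  have h01 : x0.val / 3 = x1.val / 3 := by simp [hx0, hx1]
  have := hall s hsmem x0 x1 h01
  have hs0 : s x0 = x3 := Equiv.swap_apply_left _ _
  have hs1 : s x1 = x1 := by
    apply Equiv.swap_apply_of_ne_of_ne <;> simp [hx0, hx1, hx3, Fin.ext_iff]
  rw [hs0, hs1] at this
  simp only [hx1, hx3, Fin.val_mk] at this
  omega
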